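/- If H is a strict almost-direct product of finite groups G1, G2, and G3, then each of G1, G2, and G3 is commutative. -/
import Mathlib


/-- If `H` is a strict almost-direct product of finite groups `G1, G2, G3`,
then each of `G1`, `G2` and `G3` is commutative. -/
theorem strict_almost_direct_product_factors_comm
    {G1 G2 G3 : Type*} [Group G1] [Group G2] [Group G3]
    [Finite G1] [Finite G2] [Finite G3]
    (H : Subgroup (G1 × G2 × G3))
    (hne : H ≠ ⊤)
    (h1 : ∀ (b : G2) (c : G3), ∃! a : G1, ((a, b, c) : G1 × G2 × G3) ∈ H)
    (h2 : ∀ (a : G1) (c : G3), ∃! b : G2, ((a, b, c) : G1 × G2 × G3) ∈ H)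
    (h3 : ∀ (a : G1) (b : G2), ∃! c : G3, ((a, b, c) : G1 × G2 × G3) ∈ H) :
    (∀ x y : G1, x * y = y * x) ∧ (∀ x y : G2, x * y = y * x) ∧
      (∀ x y : G3, x * y = y * x) := by
  refine ⟨?_, ?_, ?_⟩
  · intro x y
    obtain ⟨b, hb, -⟩ := h2 x 1
    obtain ⟨c, hc, -⟩ := h3 y 1
    obtain ⟨a, -, ha⟩ := h1 b c
    have hxy : ((x * y, b, c) : G1 × G2 × G3) ∈ H := by
      have := H.mul_mem hb hc
      simpa [Prod.mk_mul_mk] using this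
    have hyx : ((y * x, b, c) : G1 × G2 × G3) ∈ H := by
      have := H.mul_mem hc hb
      simpa [Prod.mk_mul_mk] using this
    rw [ha _ hxy, ha _ hyx]
  · intro x y
    obtain ⟨a, ha, -⟩ := h1 x 1
    obtain ⟨c, hc, -⟩ := h3 1 y
    obtain ⟨b, -, hb⟩ := h2 a c
    have hxy : ((a, x * y, c) : G1 × G2 × G3) ∈ H := by
      have := H.mul_mem ha hc
      simpa [Prod.mk_mul_mk] using this
    have hyx : ((a, y * x, c) : G1 × G2 × G3) ∈ H := by
      have := H.mul_mem hc ha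
      simpa [Prod.mk_mul_mk] using this
    rw [hb _ hxy, hb _ hyx]
  · intro x y
    obtain ⟨a, ha, -⟩ := h1 1 x
    obtain ⟨b, hb, -⟩ := h2 1 y
    obtain ⟨c, -, hc⟩ := h3 a b
    have hxy : ((a, b, x * y) : G1 × G2 × G3) ∈ H := by
      have := H.mul_mem ha hb
      simpa [Prod.mk_mul_mk] using this
    have hyx : ((a, b, y * x) : G1 × G2 × G3) ∈ H := by
      have := H.mul_mem hb ha
      simpa [Prod.mk_mul_mk] using this
    rw [hc _ hxy, hc _ hyx]
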